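/- For every real s ≥ 0 and all k, l ∈ ℤ² \ {0} with k + l ≠ 0 and k − l ≠ 0, the Lie bracket of the basis vector fields satisfies the structure-constant identity [A^s_k, A^s_l] = ([k,l]/(2|k|^{s+1}|l|^{s+1}))·(|k+l|^{s+1} B^s_{k+l} + |k−l|^{s+1} B^s_{k−l}), as an equality of vector fields on ℝ². -/

import Mathlib

open Real

/-- Euclidean norm of a lattice point `k ∈ ℤ²`. -/
noncomputable def nZ (k : ℤ × ℤ) : ℝ := Real.sqrt ((k.1 : ℝ) ^ 2 + (k.2 : ℝ) ^ 2)

/-- `k · θ`. -/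
noncomputable def dotZ (k : ℤ × ℤ) (θ : ℝ × ℝ) : ℝ := (k.1 : ℝ) * θ.1 + (k.2 : ℝ) * θ.2

/-- The vector field `A^s_k(θ) = |k|^{-(s+1)} cos(k·θ)·(k₂, -k₁)` (zero for `k = 0`). -/
noncomputable def vfA (s : ℝ) (k : ℤ × ℤ) (θ : ℝ × ℝ) : ℝ × ℝ :=
  ((nZ k) ^ (-(s + 1)) * Real.cos (dotZ k θ)) • ((k.2 : ℝ), -(k.1 : ℝ))

/-- The vector field `B^s_k(θ) = |k|^{-(s+1)} sin(k·θ)·(k₂, -k₁)` (zero for `k = 0`). -/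
noncomputable def vfB (s : ℝ) (k : ℤ × ℤ) (θ : ℝ × ℝ) : ℝ × ℝ :=
  ((nZ k) ^ (-(s + 1)) * Real.sin (dotZ k θ)) • ((k.2 : ℝ), -(k.1 : ℝ))

/-- `[k,l] = k₁ l₂ - k₂ l₁`. -/
noncomputable def crossZ (k l : ℤ × ℤ) : ℝ := (k.1 : ℝ) * (l.2 : ℝ) - (k.2 : ℝ) * (l.1 : ℝ)

/-- Lie bracket of C¹ vector fields on `ℝ²`: `[X,Y](θ) = DY(θ)(X(θ)) - DX(θ)(Y(θ))`. -/
noncomputable def lieB (X Y : ℝ × ℝ → ℝ × ℝ) (θ : ℝ × ℝ) : ℝ × ℝ :=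
  fderiv ℝ Y θ (X θ) - fderiv ℝ X θ (Y θ)

noncomputable def Lmap (k : ℤ × ℤ) : (ℝ × ℝ) →L[ℝ] ℝ :=
  (k.1 : ℝ) • ContinuousLinearMap.fst ℝ ℝ ℝ + (k.2 : ℝ) • ContinuousLinearMap.snd ℝ ℝ ℝ

lemma hasFDerivAt_dotZ (k : ℤ × ℤ) (θ : ℝ × ℝ) : HasFDerivAt (dotZ k) (Lmap k) θ := by
  have h := (Lmap k).hasFDerivAt (x := θ)
  have he : dotZ k = fun θ => (Lmap k) θ := by
    funext θ; simp [dotZ, Lmap]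
  rw [he]; exact h

lemma hasFDerivAt_vfA (s : ℝ) (k : ℤ × ℤ) (θ : ℝ × ℝ) :
    HasFDerivAt (vfA s k)
      ((((nZ k) ^ (-(s + 1)) : ℝ) • ((-Real.sin (dotZ k θ)) • Lmap k)).smulRight
        ((k.2 : ℝ), -(k.1 : ℝ))) θ := by
  have h1 := (hasFDerivAt_dotZ k θ).cos
  have h2 := h1.const_mul ((nZ k) ^ (-(s + 1)) : ℝ)
  have h3 := h2.smul_const (F := ℝ × ℝ) ((k.2 : ℝ), -(k.1 : ℝ))
  exact h3

lemma fderiv_vfA_apply (s : ℝ) (k : ℤ × ℤ) (θ w : ℝ × ℝ) :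
    fderiv ℝ (vfA s k) θ w =
      ((nZ k) ^ (-(s + 1)) * -Real.sin (dotZ k θ) * dotZ k w) • ((k.2 : ℝ), -(k.1 : ℝ)) := by
  rw [(hasFDerivAt_vfA s k θ).fderiv]
  simp only [ContinuousLinearMap.smulRight_apply, ContinuousLinearMap.smul_apply,
    ContinuousLinearMap.add_apply, ContinuousLinearMap.coe_fst', ContinuousLinearMap.coe_snd',
    Lmap, dotZ, smul_smul, smul_eq_mul, Prod.smul_mk, Prod.ext_iff, Prod.mk.injEq]

lemma nZ_pos {m : ℤ × ℤ} (hm : m ≠ 0) : 0 < nZ m := by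
  have h : (m.1 : ℝ) ≠ 0 ∨ (m.2 : ℝ) ≠ 0 := by
    by_contra h
    push_neg at h
    exact hm (Prod.ext (by exact_mod_cast h.1) (by exact_mod_cast h.2))
  have hp : (0 : ℝ) < (m.1 : ℝ) ^ 2 + (m.2 : ℝ) ^ 2 := by
    rcases h with h | h
    · have : 0 < (m.1 : ℝ) ^ 2 := by positivity
      nlinarith [sq_nonneg ((m.2 : ℝ))]
    · have : 0 < (m.2 : ℝ) ^ 2 := by positivity
      nlinarith [sq_nonneg ((m.1 : ℝ))]
  exact Real.sqrt_pos.mpr hp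

theorem structure_constants_AA (s : ℝ) (hs : 0 ≤ s) (k l : ℤ × ℤ)
    (hk : k ≠ 0) (hl : l ≠ 0) (hkl : k + l ≠ 0) (hkl' : k - l ≠ 0) :
    ∀ θ : ℝ × ℝ,
      lieB (vfA s k) (vfA s l) θ =
        (crossZ k l / (2 * (nZ k) ^ (s + 1) * (nZ l) ^ (s + 1))) •
          ((nZ (k + l)) ^ (s + 1) • vfB s (k + l) θ + (nZ (k - l)) ^ (s + 1) • vfB s (k - l) θ) := by
  intro θ
  have ha := nZ_pos hk
  have hb := nZ_pos hl
  have hc := nZ_pos hkl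
  have hd := nZ_pos hkl'
  have hA : (0 : ℝ) < (nZ k) ^ (s + 1) := Real.rpow_pos_of_pos ha _
  have hB : (0 : ℝ) < (nZ l) ^ (s + 1) := Real.rpow_pos_of_pos hb _
  have hC : (0 : ℝ) < (nZ (k + l)) ^ (s + 1) := Real.rpow_pos_of_pos hc _
  have hD : (0 : ℝ) < (nZ (k - l)) ^ (s + 1) := Real.rpow_pos_of_pos hd _
  have hnegA : (nZ k) ^ (-(s + 1)) = ((nZ k) ^ (s + 1))⁻¹ := Real.rpow_neg ha.le _
  have hnegB : (nZ l) ^ (-(s + 1)) = ((nZ l) ^ (s + 1))⁻¹ := Real.rpow_neg hb.le _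
  have hnegC : (nZ (k + l)) ^ (-(s + 1)) = ((nZ (k + l)) ^ (s + 1))⁻¹ := Real.rpow_neg hc.le _
  have hnegD : (nZ (k - l)) ^ (-(s + 1)) = ((nZ (k - l)) ^ (s + 1))⁻¹ := Real.rpow_neg hd.le _
  set x := dotZ k θ with hx
  set y := dotZ l θ with hy
  have hsum : dotZ (k + l) θ = x + y := by
    simp only [hx, hy, dotZ, Prod.fst_add, Prod.snd_add]; push_cast; ring
  have hdiff : dotZ (k - l) θ = x - y := by
    simp only [hx, hy, dotZ, Prod.fst_sub, Prod.snd_sub]; push_cast; ring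
  have hdk : dotZ k (vfA s l θ) = (nZ l) ^ (-(s + 1)) * Real.cos y * crossZ k l := by
    simp only [vfA, dotZ, crossZ, Prod.smul_mk, smul_eq_mul, hy]; ring
  have hdl : dotZ l (vfA s k θ) = (nZ k) ^ (-(s + 1)) * Real.cos x * (-crossZ k l) := by
    simp only [vfA, dotZ, crossZ, Prod.smul_mk, smul_eq_mul, hx]; ring
  have hc2 : ((k + l).2 : ℝ) = (k.2 : ℝ) + (l.2 : ℝ) := by push_cast [Prod.snd_add]; ring
  have hc1 : ((k + l).1 : ℝ) = (k.1 : ℝ) + (l.1 : ℝ) := by push_cast [Prod.fst_add]; ring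
  have hd2 : ((k - l).2 : ℝ) = (k.2 : ℝ) - (l.2 : ℝ) := by push_cast [Prod.snd_sub]; ring
  have hd1 : ((k - l).1 : ℝ) = (k.1 : ℝ) - (l.1 : ℝ) := by push_cast [Prod.fst_sub]; ring
  rw [lieB, fderiv_vfA_apply, fderiv_vfA_apply, hdk, hdl]
  simp only [vfB, hsum, hdiff, hc1, hc2, hd1, hd2, ← hx, ← hy, Real.sin_add, Real.sin_sub,
    hnegA, hnegB, hnegC, hnegD, Prod.smul_mk, smul_eq_mul, smul_add, Prod.mk_add_mk,
    Prod.ext_iff, Prod.mk.injEq, Prod.mk_sub_mk]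
  constructor <;> · field_simp; ring
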